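/- arXiv:1902.08420 — 2 statements merged into one kernel-verified Lean document; each statement's English description precedes it below -/
import Mathlib

section
/- Completeness of the commuting diagrams for (top) in Simple: for all Simple expressions e, t, t', if e →top t and t →sr t', then e →sr t', or there exists e1 such that e →sr e1 and e1 →top t', or there exists e1 such that e →sr e1 and e1 →sr t'. -/
/-- Expressions of the calculus `Simple`: `e ::= ⊥ | ⊤ | ¬e | e ∧ e`. -/
inductive SExp : Type where
  | bot : SExp
  | top : SExp
  | neg : SExp → SExp
  | and : SExp → SExp → SExp

/-- Evaluation contexts: `A ::= [·] | ¬A | A ∧ e`. -/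
inductive ECtx : Type where
  | hole : ECtx
  | neg : ECtx → ECtx
  | and : ECtx → SExp → ECtx

/-- Hole filling for evaluation contexts. -/
def ECtx.fill : ECtx → SExp → SExp
  | .hole, e => e
  | .neg A, e => .neg (A.fill e)
  | .and A t, e => .and (A.fill e) t

/-- General contexts: `C ::= [·] | ¬C | C ∧ e | e ∧ C`. -/
inductive GCtx : Type where
  | hole : GCtx
  | neg : GCtx → GCtx
  | andL : GCtx → SExp → GCtx
  | andR : SExp → GCtx → GCtx

/-- Hole filling for general contexts. -/
def GCtx.fill : GCtx → SExp → SExp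
  | .hole, e => e
  | .neg C, e => .neg (C.fill e)
  | .andL C t, e => .and (C.fill e) t
  | .andR t C, e => .and t (C.fill e)

/-- Labels of the standard-reduction rules. -/
inductive SRLab : Type where
  | bot | top | neg1 | neg2

/-- The labelled standard reduction rules of `Simple`. -/
inductive SRL : SRLab → SExp → SExp → Prop where
  | bot (A : ECtx) (e : SExp) : SRL .bot (A.fill (.and .bot e)) (A.fill .bot)
  | top (A : ECtx) (e : SExp) : SRL .top (A.fill (.and .top e)) (A.fill e)
  | neg1 (A : ECtx) : SRL .neg1 (A.fill (.neg .top)) (A.fill .bot)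
  | neg2 (A : ECtx) : SRL .neg2 (A.fill (.neg .bot)) (A.fill .top)

/-- The standard reduction `→sr` (union of the four rules). -/
def SR (e e' : SExp) : Prop := ∃ a, SRL a e e'

/-- The transformation `(top)`: `C[⊤ ∧ e] →top C[e]` for all general contexts `C`. -/
inductive TopT : SExp → SExp → Prop where
  | mk (C : GCtx) (e : SExp) : TopT (C.fill (.and .top e)) (C.fill e)

/-- Convergence: `e ↓` iff `e →sr* ⊤`. -/
def SConv (e : SExp) : Prop := Relation.ReflTransGen SR e .top

lemma sr_neg_cong {x y : SExp} (h : SR x y) : SR (.neg x) (.neg y) := by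
  obtain ⟨a, h⟩ := h
  cases h with
  | bot A e => exact ⟨.bot, SRL.bot (.neg A) e⟩
  | top A e => exact ⟨.top, SRL.top (.neg A) e⟩
  | neg1 A => exact ⟨.neg1, SRL.neg1 (.neg A)⟩
  | neg2 A => exact ⟨.neg2, SRL.neg2 (.neg A)⟩

lemma sr_andL_cong {x y : SExp} (r : SExp) (h : SR x y) : SR (.and x r) (.and y r) := by
  obtain ⟨a, h⟩ := h
  cases h with
  | bot A e => exact ⟨.bot, SRL.bot (.and A r) e⟩
  | top A e => exact ⟨.top, SRL.top (.and A r) e⟩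
  | neg1 A => exact ⟨.neg1, SRL.neg1 (.and A r)⟩
  | neg2 A => exact ⟨.neg2, SRL.neg2 (.and A r)⟩

lemma top_neg_cong {x y : SExp} (h : TopT x y) : TopT (.neg x) (.neg y) := by
  cases h with
  | mk C e => exact TopT.mk (.neg C) e

lemma top_andL_cong {x y : SExp} (r : SExp) (h : TopT x y) : TopT (.and x r) (.and y r) := by
  cases h with
  | mk C e => exact TopT.mk (.andL C r) e

lemma top_andR_cong {x y : SExp} (l : SExp) (h : TopT x y) : TopT (.and l x) (.and l y) := by
  cases h with
  | mk C e => exact TopT.mk (.andR l C) e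

lemma sr_bot_hole (e : SExp) : SR (.and .bot e) .bot := ⟨.bot, SRL.bot .hole e⟩
lemma sr_top_hole (e : SExp) : SR (.and .top e) e := ⟨.top, SRL.top .hole e⟩
lemma sr_neg1_hole : SR (.neg .top) .bot := ⟨.neg1, SRL.neg1 .hole⟩
lemma sr_neg2_hole : SR (.neg .bot) .top := ⟨.neg2, SRL.neg2 .hole⟩

lemma ecfill_neg {A : ECtx} {r x : SExp} (h : A.fill r = .neg x) :
    (A = .hole ∧ r = .neg x) ∨ ∃ A', A = .neg A' ∧ A'.fill r = x := by
  cases A with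
  | hole => exact Or.inl ⟨rfl, h⟩
  | neg A' => injection h with h; exact Or.inr ⟨A', rfl, h⟩
  | and A' t => simp [ECtx.fill] at h

lemma ecfill_and {A : ECtx} {r x s : SExp} (h : A.fill r = .and x s) :
    (A = .hole ∧ r = .and x s) ∨ ∃ A', A = .and A' s ∧ A'.fill r = x := by
  cases A with
  | hole => exact Or.inl ⟨rfl, h⟩
  | neg A' => simp [ECtx.fill] at h
  | and A' t =>
    injection h with h1 h2
    exact Or.inr ⟨A', by rw [h2], h1⟩

lemma gfill_top {C : GCtx} {u : SExp} (h : GCtx.fill C u = .top) :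
    C = .hole ∧ u = .top := by
  cases C <;> simp_all [GCtx.fill]

lemma gfill_bot {C : GCtx} {u : SExp} (h : GCtx.fill C u = .bot) :
    C = .hole ∧ u = .bot := by
  cases C <;> simp_all [GCtx.fill]

lemma sr_neg_inv {x y : SExp} (h : SR (.neg x) y) :
    (x = .top ∧ y = .bot) ∨ (x = .bot ∧ y = .top) ∨ ∃ x', SR x x' ∧ y = .neg x' := by
  obtain ⟨a, h⟩ := h
  generalize hw : SExp.neg x = w at h
  cases h with
  | bot A e =>
    rcases ecfill_neg hw.symm with ⟨_, h2⟩ | ⟨A', rfl, h2⟩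
    · exact absurd h2 (by simp)
    · exact Or.inr (Or.inr ⟨A'.fill .bot, ⟨.bot, h2 ▸ SRL.bot A' e⟩, rfl⟩)
  | top A e =>
    rcases ecfill_neg hw.symm with ⟨_, h2⟩ | ⟨A', rfl, h2⟩
    · exact absurd h2 (by simp)
    · exact Or.inr (Or.inr ⟨A'.fill e, ⟨.top, h2 ▸ SRL.top A' e⟩, rfl⟩)
  | neg1 A =>
    rcases ecfill_neg hw.symm with ⟨rfl, h2⟩ | ⟨A', rfl, h2⟩
    · injection h2 with h2; exact Or.inl ⟨h2.symm, rfl⟩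
    · exact Or.inr (Or.inr ⟨A'.fill .bot, ⟨.neg1, h2 ▸ SRL.neg1 A'⟩, rfl⟩)
  | neg2 A =>
    rcases ecfill_neg hw.symm with ⟨rfl, h2⟩ | ⟨A', rfl, h2⟩
    · injection h2 with h2; exact Or.inr (Or.inl ⟨h2.symm, rfl⟩)
    · exact Or.inr (Or.inr ⟨A'.fill .top, ⟨.neg2, h2 ▸ SRL.neg2 A'⟩, rfl⟩)

lemma sr_and_inv {x r y : SExp} (h : SR (.and x r) y) :
    (x = .bot ∧ y = .bot) ∨ (x = .top ∧ y = r) ∨ ∃ x', SR x x' ∧ y = .and x' r := by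
  obtain ⟨a, h⟩ := h
  generalize hw : SExp.and x r = w at h
  cases h with
  | bot A e =>
    rcases ecfill_and hw.symm with ⟨rfl, h2⟩ | ⟨A', rfl, h2⟩
    · injection h2 with h2 h3; exact Or.inl ⟨h2.symm, rfl⟩
    · exact Or.inr (Or.inr ⟨A'.fill .bot, ⟨.bot, h2 ▸ SRL.bot A' e⟩, rfl⟩)
  | top A e =>
    rcases ecfill_and hw.symm with ⟨rfl, h2⟩ | ⟨A', rfl, h2⟩
    · injection h2 with h2 h3; exact Or.inr (Or.inl ⟨h2.symm, h3⟩)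
    · exact Or.inr (Or.inr ⟨A'.fill e, ⟨.top, h2 ▸ SRL.top A' e⟩, rfl⟩)
  | neg1 A =>
    rcases ecfill_and hw.symm with ⟨_, h2⟩ | ⟨A', rfl, h2⟩
    · exact absurd h2 (by simp)
    · exact Or.inr (Or.inr ⟨A'.fill .bot, ⟨.neg1, h2 ▸ SRL.neg1 A'⟩, rfl⟩)
  | neg2 A =>
    rcases ecfill_and hw.symm with ⟨_, h2⟩ | ⟨A', rfl, h2⟩
    · exact absurd h2 (by simp)
    · exact Or.inr (Or.inr ⟨A'.fill .top, ⟨.neg2, h2 ▸ SRL.neg2 A'⟩, rfl⟩)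

/-- completeness of the commuting diagrams for `(top)` in `Simple`. -/
theorem simple_top_commuting_diagrams :
    ∀ e t t' : SExp, TopT e t → SR t t' →
      SR e t' ∨ (∃ e1, SR e e1 ∧ TopT e1 t') ∨ (∃ e1, SR e e1 ∧ SR e1 t') := by
  intro e t t' htop hsr
  cases htop with
  | mk C u =>
    induction C generalizing t' with
    | hole =>
      exact Or.inr (Or.inr ⟨u, sr_top_hole u, hsr⟩)
    | neg C ih =>
      rcases sr_neg_inv hsr with ⟨hx, rfl⟩ | ⟨hx, rfl⟩ | ⟨x', hx, rfl⟩
      · obtain ⟨rfl, rfl⟩ := gfill_top hx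
        exact Or.inr (Or.inr ⟨.neg .top, sr_neg_cong (sr_top_hole .top), sr_neg1_hole⟩)
      · obtain ⟨rfl, rfl⟩ := gfill_bot hx
        exact Or.inr (Or.inr ⟨.neg .bot, sr_neg_cong (sr_top_hole .bot), sr_neg2_hole⟩)
      · rcases ih x' hx with h | ⟨e1, h1, h2⟩ | ⟨e1, h1, h2⟩
        · exact Or.inl (sr_neg_cong h)
        · exact Or.inr (Or.inl ⟨.neg e1, sr_neg_cong h1, top_neg_cong h2⟩)
        · exact Or.inr (Or.inr ⟨.neg e1, sr_neg_cong h1, sr_neg_cong h2⟩)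
    | andL C s ih =>
      rcases sr_and_inv hsr with ⟨hx, rfl⟩ | ⟨hx, hy⟩ | ⟨x', hx, rfl⟩
      · obtain ⟨rfl, rfl⟩ := gfill_bot hx
        exact Or.inr (Or.inr ⟨.and .bot s, sr_andL_cong s (sr_top_hole .bot), sr_bot_hole s⟩)
      · obtain ⟨rfl, rfl⟩ := gfill_top hx
        exact Or.inr (Or.inr ⟨.and .top s, sr_andL_cong s (sr_top_hole .top),
          by rw [hy]; exact sr_top_hole s⟩)
      · rcases ih x' hx with h | ⟨e1, h1, h2⟩ | ⟨e1, h1, h2⟩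
        · exact Or.inl (sr_andL_cong s h)
        · exact Or.inr (Or.inl ⟨.and e1 s, sr_andL_cong s h1, top_andL_cong s h2⟩)
        · exact Or.inr (Or.inr ⟨.and e1 s, sr_andL_cong s h1, sr_andL_cong s h2⟩)
    | andR l C ih =>
      rcases sr_and_inv hsr with ⟨rfl, rfl⟩ | ⟨rfl, rfl⟩ | ⟨x', hx, rfl⟩
      · exact Or.inl (sr_bot_hole _)
      · exact Or.inr (Or.inl ⟨C.fill (.and .top u), sr_top_hole _, TopT.mk C u⟩)
      · exact Or.inr (Or.inl ⟨.and x' (C.fill (.and .top u)),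
          sr_andL_cong _ hx, top_andR_cong x' (TopT.mk C u)⟩)
end

section
/- The transformation (top) in Simple reflects convergence: for all Simple expressions e1, e2, if e1 →top e2 and e2↓, then e1↓. -/
def SExp.eval : SExp → Bool
  | .bot => false
  | .top => true
  | .neg e => !e.eval
  | .and a b => a.eval && b.eval

def SExp.ofBool : Bool → SExp
  | false => .bot
  | true => .top

def ECtx.comp : ECtx → ECtx → ECtx
  | .hole, B => B
  | .neg A, B => .neg (A.comp B)
  | .and A t, B => .and (A.comp B) t

theorem ECtx.fill_comp (A B : ECtx) (e : SExp) :
    (A.comp B).fill e = A.fill (B.fill e) := by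
  induction A with
  | hole => rfl
  | neg A ih => simp [ECtx.comp, ECtx.fill, ih]
  | and A t ih => simp [ECtx.comp, ECtx.fill, ih]

theorem SR.lift {e e' : SExp} (A : ECtx) (h : SR e e') : SR (A.fill e) (A.fill e') := by
  obtain ⟨a, h⟩ := h
  cases h with
  | bot B t => exact ⟨_, by rw [← ECtx.fill_comp, ← ECtx.fill_comp]; exact SRL.bot _ t⟩
  | top B t => exact ⟨_, by rw [← ECtx.fill_comp, ← ECtx.fill_comp]; exact SRL.top _ t⟩
  | neg1 B => exact ⟨_, by rw [← ECtx.fill_comp, ← ECtx.fill_comp]; exact SRL.neg1 _⟩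
  | neg2 B => exact ⟨_, by rw [← ECtx.fill_comp, ← ECtx.fill_comp]; exact SRL.neg2 _⟩

theorem SRstar.lift {e e' : SExp} (A : ECtx) (h : Relation.ReflTransGen SR e e') :
    Relation.ReflTransGen SR (A.fill e) (A.fill e') := by
  induction h with
  | refl => exact .refl
  | tail _ h ih => exact ih.tail (SR.lift A h)

theorem SExp.reduces (e : SExp) :
    Relation.ReflTransGen SR e (.ofBool e.eval) := by
  induction e with
  | bot => exact .refl
  | top => exact .refl
  | neg e ih =>
    have h1 : Relation.ReflTransGen SR (SExp.neg e) (SExp.neg (.ofBool e.eval)) :=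
      SRstar.lift (.neg .hole) ih
    cases h : e.eval with
    | false =>
      rw [h] at h1
      simpa [SExp.eval, h, SExp.ofBool, ECtx.fill] using h1.tail ⟨_, SRL.neg2 .hole⟩
    | true =>
      rw [h] at h1
      simpa [SExp.eval, h, SExp.ofBool, ECtx.fill] using h1.tail ⟨_, SRL.neg1 .hole⟩
  | and a b iha ihb =>
    have h1 : Relation.ReflTransGen SR (SExp.and a b) (SExp.and (.ofBool a.eval) b) :=
      SRstar.lift (.and .hole b) iha
    cases h : a.eval with
    | false =>
      rw [h] at h1
      have h2 : SR (SExp.and .bot b) .bot := ⟨_, SRL.bot .hole b⟩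
      simpa [SExp.eval, h, SExp.ofBool] using h1.tail h2
    | true =>
      rw [h] at h1
      have h2 : SR (SExp.and .top b) b := ⟨_, SRL.top .hole b⟩
      simpa [SExp.eval, h, SExp.ofBool] using (h1.tail h2).trans ihb

theorem eval_fill_E (A : ECtx) {e e' : SExp} (h : e.eval = e'.eval) :
    (A.fill e).eval = (A.fill e').eval := by
  induction A with
  | hole => exact h
  | neg A ih => simp [ECtx.fill, SExp.eval, ih]
  | and A t ih => simp [ECtx.fill, SExp.eval, ih]

theorem eval_fill_G (C : GCtx) {e e' : SExp} (h : e.eval = e'.eval) :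
    (C.fill e).eval = (C.fill e').eval := by
  induction C with
  | hole => exact h
  | neg C ih => simp [GCtx.fill, SExp.eval, ih]
  | andL C t ih => simp [GCtx.fill, SExp.eval, ih]
  | andR t C ih => simp [GCtx.fill, SExp.eval, ih]

theorem SR.eval_eq {e e' : SExp} (h : SR e e') : e.eval = e'.eval := by
  obtain ⟨a, h⟩ := h
  cases h with
  | bot A t => exact eval_fill_E A (by simp [SExp.eval])
  | top A t => exact eval_fill_E A (by simp [SExp.eval])
  | neg1 A => exact eval_fill_E A (by simp [SExp.eval])
  | neg2 A => exact eval_fill_E A (by simp [SExp.eval])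

theorem SRstar.eval_eq {e e' : SExp} (h : Relation.ReflTransGen SR e e') :
    e.eval = e'.eval := by
  induction h with
  | refl => rfl
  | tail _ h ih => rw [ih, h.eval_eq]

theorem SConv.eval_true {e : SExp} (h : SConv e) : e.eval = true :=
  SRstar.eval_eq h

/-- the transformation `(top)` reflects convergence. -/
theorem simple_top_reflects_convergence :
    ∀ e1 e2 : SExp, TopT e1 e2 → SConv e2 → SConv e1 := by
  rintro _ _ ⟨C, e⟩ h2
  have he2 := h2.eval_true
  have he1 : (C.fill (.and .top e)).eval = true := by
    rw [eval_fill_G C (e' := e) (by simp [SExp.eval])]; exact he2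
  have := SExp.reduces (C.fill (.and .top e))
  rw [he1] at this
  exact this
end
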